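/- Let W ∈ ℂ^{N×N} be Hermitian positive semidefinite and h ∈ ℂ^N with hᴴ W h > 0. Define W̃ = (W h)(W h)ᴴ / (hᴴ W h). Then: (i) W̃ is Hermitian positive semidefinite of rank exactly one; (ii) hᴴ W̃ h = hᴴ W h, i.e., Tr((h hᴴ) W̃) = Tr((h hᴴ) W); and (iii) W − W̃ is positive semidefinite. -/

import Mathlib

open Matrix
open scoped ComplexOrder

private lemma cs_dot {N : ℕ} (a b : Fin N → ℂ) :
    Complex.normSq (star a ⬝ᵥ b) ≤ (star a ⬝ᵥ a).re * (star b ⬝ᵥ b).re := by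
  have H := inner_mul_inner_self_le (𝕜 := ℂ)
    (WithLp.toLp 2 a) (WithLp.toLp 2 b)
  simp only [EuclideanSpace.inner_toLp_toLp] at H
  rw [dotProduct_comm b (star a), dotProduct_comm a (star b), dotProduct_comm a (star a),
    dotProduct_comm b (star b)] at H
  have h1 : star b ⬝ᵥ a = star (star a ⬝ᵥ b) := by rw [star_dotProduct]
  rw [h1] at H
  simpa [Complex.normSq_eq_norm_sq, sq] using H

private lemma vmv_mulVec {N : ℕ} (v w x : Fin N → ℂ) :
    Matrix.vecMulVec v w *ᵥ x = (w ⬝ᵥ x) • v := by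
  ext i
  simp [Matrix.vecMulVec, Matrix.mulVec, dotProduct, Finset.mul_sum,
    mul_comm, mul_assoc, mul_left_comm]

private lemma quad_smul_vmv {N : ℕ} (v x : Fin N → ℂ) (c : ℂ) :
    star x ⬝ᵥ (c • Matrix.vecMulVec v (star v)) *ᵥ x
      = c * ((star x ⬝ᵥ v) * star (star x ⬝ᵥ v)) := by
  rw [Matrix.smul_mulVec, dotProduct_smul]
  congr 1
  have h1 : star (star x ⬝ᵥ v) = star v ⬝ᵥ x := by rw [star_dotProduct]; simp
  rw [h1, vmv_mulVec, dotProduct_smul, smul_eq_mul, mul_comm]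

private lemma trace_vmv_mul {N : ℕ} (h : Fin N → ℂ) (M : Matrix (Fin N) (Fin N) ℂ) :
    (Matrix.vecMulVec h (star h) * M).trace = star h ⬝ᵥ M *ᵥ h := by
  simp only [Matrix.trace, Matrix.diag, Matrix.mul_apply, Matrix.vecMulVec_apply,
    Matrix.mulVec, dotProduct, Finset.mul_sum]
  rw [Finset.sum_comm]
  exact Finset.sum_congr rfl fun j _ => Finset.sum_congr rfl fun i _ => by ring

/-- Rank-one extraction: for `W` PSD and `h` with `hᴴ W h > 0`, the matrix
`W̃ = (W h)(W h)ᴴ / (hᴴ W h)` is PSD of rank one, preserves the received power at the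
desired receiver, and `W − W̃` is PSD. -/
theorem rank_one_extraction {N : ℕ} (W : Matrix (Fin N) (Fin N) ℂ) (hW : W.PosSemidef)
    (h : Fin N → ℂ) (hpos : 0 < (star h ⬝ᵥ W *ᵥ h).re) :
    let Wt : Matrix (Fin N) (Fin N) ℂ :=
      (star h ⬝ᵥ W *ᵥ h)⁻¹ • Matrix.vecMulVec (W *ᵥ h) (star (W *ᵥ h))
    Wt.PosSemidef ∧ Wt.rank = 1 ∧
    star h ⬝ᵥ Wt *ᵥ h = star h ⬝ᵥ W *ᵥ h ∧
    (Matrix.vecMulVec h (star h) * Wt).trace = (Matrix.vecMulVec h (star h) * W).trace ∧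
    (W - Wt).PosSemidef := by
  intro Wt
  set c : ℂ := star h ⬝ᵥ W *ᵥ h with hc_def
  set v : Fin N → ℂ := W *ᵥ h with hv_def
  have hcnn : 0 ≤ c := hW.dotProduct_mulVec_nonneg h
  have him : c.im = 0 := ((Complex.le_def.1 hcnn).2).symm
  have hcre : (c.re : ℂ) = c := Complex.ext (by simp) (by simp [him])
  have hc0 : c ≠ 0 := by
    intro hzero; rw [hzero] at hpos; simp at hpos
  have hcstar : star c = c := by
    rw [← hcre]; simp [Complex.star_def]
  -- received power
  have hpow : star h ⬝ᵥ Wt *ᵥ h = c := by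
    have := quad_smul_vmv v h c⁻¹
    rw [show star h ⬝ᵥ v = c from rfl, hcstar] at this
    rw [this]; field_simp
  -- quadratic form of Wt at any x
  have hquad : ∀ x : Fin N → ℂ, star x ⬝ᵥ Wt *ᵥ x
      = ((c.re⁻¹ * Complex.normSq (star x ⬝ᵥ v) : ℝ) : ℂ) := by
    intro x
    rw [quad_smul_vmv v x c⁻¹]
    rw [show star (star x ⬝ᵥ v) = (starRingEnd ℂ) (star x ⬝ᵥ v) from rfl,
      Complex.mul_conj, show (c⁻¹ : ℂ) = ((c.re⁻¹ : ℝ) : ℂ) by rw [Complex.ofReal_inv, hcre],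
      ← Complex.ofReal_mul]
  -- Hermitian of Wt
  have hWtH : Wt.IsHermitian := by
    have : Wtᴴ = Wt := by
      ext i j
      simp only [Wt, Matrix.conjTranspose_apply, Matrix.smul_apply, Matrix.vecMulVec_apply,
        smul_eq_mul, star_mul']
      rw [show star c⁻¹ = c⁻¹ by rw [star_inv₀, hcstar]]
      simp [mul_comm]
      exact Or.inl rfl
    exact this
  have hWtPSD : Wt.PosSemidef := by
    refine .of_dotProduct_mulVec_nonneg hWtH fun x => ?_
    rw [hquad x]
    rw [Complex.zero_le_real]
    exact mul_nonneg (inv_nonneg.2 hpos.le) (Complex.normSq_nonneg _)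
  refine ⟨hWtPSD, ?_, by rw [hpow], ?_, ?_⟩
  · -- rank
    have hle : Wt.rank ≤ 1 := by
      have heq : Wt = Matrix.vecMulVec (c⁻¹ • v) (star v) := by
        ext i j
        simp [Wt, Matrix.vecMulVec_apply, smul_eq_mul, mul_assoc]
        rfl
      rw [heq, Matrix.vecMulVec_eq Unit]
      calc (Matrix.replicateCol Unit (c⁻¹ • v) * Matrix.replicateRow Unit (star v)).rank
          ≤ (Matrix.replicateCol Unit (c⁻¹ • v)).rank := Matrix.rank_mul_le_left _ _
        _ ≤ Fintype.card Unit := Matrix.rank_le_card_width _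
        _ = 1 := by simp
    have hne : Wt.rank ≠ 0 := by
      intro h0
      have hbot : LinearMap.range Wt.mulVecLin = ⊥ :=
        Submodule.finrank_eq_zero.mp h0
      have : Wt *ᵥ h = 0 := by
        have := hbot ▸ LinearMap.mem_range_self Wt.mulVecLin h
        simpa [Submodule.mem_bot] using this
      rw [this] at hpow
      simp only [dotProduct_zero] at hpow
      exact hc0 hpow.symm
    omega
  · rw [trace_vmv_mul, trace_vmv_mul, hpow]
  · -- W - Wt PSD
    refine .of_dotProduct_mulVec_nonneg (hW.1.sub hWtH) fun x => ?_
    have hqnn : 0 ≤ star x ⬝ᵥ W *ᵥ x := hW.dotProduct_mulVec_nonneg x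
    set q : ℂ := star x ⬝ᵥ W *ᵥ x with hq_def
    have hqim : q.im = 0 := ((Complex.le_def.1 hqnn).2).symm
    have hqre : (q.re : ℂ) = q := Complex.ext (by simp) (by simp [hqim])
    have hqrenn : 0 ≤ q.re := (Complex.le_def.1 hqnn).1
    -- Cauchy–Schwarz via square root
    obtain ⟨S, hSH, hSsq⟩ : ∃ S : Matrix (Fin N) (Fin N) ℂ, S.IsHermitian ∧ S * S = W :=
      open scoped MatrixOrder in
      ⟨CFC.sqrt W, (CFC.sqrt_nonneg W).posSemidef.1,
        CFC.sqrt_mul_sqrt_self W (Matrix.nonneg_iff_posSemidef.2 hW)⟩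
    set a : Fin N → ℂ := S *ᵥ x with ha_def
    set b : Fin N → ℂ := S *ᵥ h with hb_def
    have hstar_a : star a = star x ᵥ* S := by
      rw [ha_def, Matrix.star_mulVec, hSH.eq]
    have hstar_b : star b = star h ᵥ* S := by
      rw [hb_def, Matrix.star_mulVec, hSH.eq]
    have hd : star a ⬝ᵥ b = star x ⬝ᵥ v := by
      rw [hstar_a, hb_def, hv_def, ← hSsq]
      simp [Matrix.dotProduct_mulVec, Matrix.vecMul_vecMul]
    have hq' : star a ⬝ᵥ a = q := by
      rw [hstar_a, ha_def, hq_def, ← hSsq]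
      simp [Matrix.dotProduct_mulVec, Matrix.vecMul_vecMul]
    have hc' : star b ⬝ᵥ b = c := by
      rw [hstar_b, hb_def, hc_def, hv_def, ← hSsq]
      simp [Matrix.dotProduct_mulVec, Matrix.vecMul_vecMul]
    have hcs : Complex.normSq (star x ⬝ᵥ v) ≤ q.re * c.re := by
      have := cs_dot a b
      rwa [hd, hq', hc'] at this
    have hsub : star x ⬝ᵥ (W - Wt) *ᵥ x
        = ((q.re - c.re⁻¹ * Complex.normSq (star x ⬝ᵥ v) : ℝ) : ℂ) := by
      rw [Matrix.sub_mulVec, dotProduct_sub, hquad x, ← hq_def,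
        Complex.ofReal_sub, Complex.ofReal_mul, Complex.ofReal_inv, hqre]
    rw [hsub, Complex.zero_le_real, sub_nonneg]
    rw [inv_mul_le_iff₀ hpos]
    linarith [hcs]
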